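/- Let F be a field, ω ∈ F a primitive n-th root of unity, and k ≥ 1 with gcd(k, n) = 1. Let 1 ≤ r ≤ n and let 𝒞 be the linear code of length n over F generated by the r vectors v_0, v_1, …, v_{r−1} where v_m has j-th coordinate ω^{(a + m·k)·j} for 0 ≤ j ≤ n−1 (i.e. the rows of the Fourier matrix F_n with indices a, a+k, …, a+(r−1)k taken modulo n). Then these r vectors are linearly independent and every nonzero codeword of 𝒞 has Hamming weight at least n − r + 1; that is, 𝒞 is an MDS (n, r, n−r+1) code. -/

import Mathlib

/-- The Hamming weight of a vector: the number of its nonzero coordinates. -/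
noncomputable def hammingWt {n : ℕ} {F : Type*} [Zero F] (v : Fin n → F) : ℕ :=
  Nat.card {j : Fin n // v j ≠ 0}

open Polynomial Finset
open scoped Classical

/-- Key lemma: for nonzero coefficients `f`, the number of coordinates where the
corresponding codeword vanishes is at most `r - 1`. -/
lemma fourier_zero_set_small {F : Type*} [Field F]
    (n r k a : ℕ) (ω : F) (hω : IsPrimitiveRoot ω n)
    (hcop : Nat.gcd k n = 1) (hr : 1 ≤ r) (hrn : r ≤ n)
    (f : Fin r → F) (hf : f ≠ 0) :
    (Finset.univ.filter fun j : Fin n =>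
        (∑ m : Fin r, f m * ω ^ ((a + (m : ℕ) * k) * (j : ℕ))) = 0).card ≤ r - 1 := by
  have hn : 0 < n := lt_of_lt_of_le hr hrn
  set P : F[X] := ∑ m : Fin r, Polynomial.C (f m) * Polynomial.X ^ (m : ℕ) with hP
  -- P is nonzero
  obtain ⟨m0, hm0⟩ : ∃ m0, f m0 ≠ 0 := by
    by_contra h
    push_neg at h
    exact hf (funext fun m => h m)
  have hcoeff : P.coeff (m0 : ℕ) = f m0 := by
    rw [hP, Polynomial.finset_sum_coeff]
    rw [Finset.sum_eq_single m0]
    · simp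
    · intro b _ hb
      have hbm : (b : ℕ) ≠ (m0 : ℕ) := fun h => hb (Fin.ext h)
      simp only [Polynomial.coeff_C_mul, Polynomial.coeff_X_pow]
      rw [if_neg (Ne.symm hbm), mul_zero]
    · simp
  have hPne : P ≠ 0 := fun h => hm0 (by rw [← hcoeff, h, Polynomial.coeff_zero])
  have hdeg : P.natDegree ≤ r - 1 := by
    apply Polynomial.natDegree_sum_le_of_forall_le
    intro m _
    calc (Polynomial.C (f m) * Polynomial.X ^ (m : ℕ)).natDegree ≤ (m : ℕ) :=
          Polynomial.natDegree_C_mul_X_pow_le _ _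
      _ ≤ r - 1 := Nat.le_sub_one_of_lt m.isLt
  -- injectivity of j ↦ ω^(k*j)
  have hζ : IsPrimitiveRoot (ω ^ k) n := hω.pow_of_coprime k hcop
  have hinj : ∀ j1 j2 : Fin n, ω ^ (k * (j1 : ℕ)) = ω ^ (k * (j2 : ℕ)) → j1 = j2 := by
    intro j1 j2 h
    rw [pow_mul, pow_mul] at h
    exact Fin.ext (hζ.pow_inj j1.isLt j2.isLt h)
  -- each zero coordinate gives a root of P
  have hsub : ∀ j : Fin n,
      (∑ m : Fin r, f m * ω ^ ((a + (m : ℕ) * k) * (j : ℕ))) = 0 →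
      P.eval (ω ^ (k * (j : ℕ))) = 0 := by
    intro j hj
    have heval : P.eval (ω ^ (k * (j : ℕ))) =
        ∑ m : Fin r, f m * (ω ^ (k * (j : ℕ))) ^ (m : ℕ) := by
      simp [hP, Polynomial.eval_finset_sum]
    have hrw : ∀ m : Fin r,
        f m * ω ^ ((a + (m : ℕ) * k) * (j : ℕ)) =
        ω ^ (a * (j : ℕ)) * (f m * (ω ^ (k * (j : ℕ))) ^ (m : ℕ)) := by
      intro m
      rw [← pow_mul,
        show (a + (m : ℕ) * k) * (j : ℕ) = a * (j : ℕ) + k * (j : ℕ) * (m : ℕ) by ring,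
        pow_add]
      ring
    rw [Finset.sum_congr rfl (fun m _ => hrw m), ← Finset.mul_sum] at hj
    have hωne : ω ^ (a * (j : ℕ)) ≠ 0 :=
      pow_ne_zero _ (hω.ne_zero hn.ne')
    rw [heval]
    exact (mul_eq_zero.mp hj).resolve_left hωne
  -- count
  have hcard : (Finset.univ.filter fun j : Fin n =>
        (∑ m : Fin r, f m * ω ^ ((a + (m : ℕ) * k) * (j : ℕ))) = 0).card ≤
      P.roots.toFinset.card := by
    refine Finset.card_le_card_of_injOn (fun j => ω ^ (k * (j : ℕ))) ?_ ?_
    · intro j hj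
      rw [Finset.mem_coe, Finset.mem_filter] at hj
      rw [Finset.mem_coe, Multiset.mem_toFinset, Polynomial.mem_roots hPne]
      exact hsub j hj.2
    · intro j1 _ j2 _ h
      exact hinj j1 j2 h
  calc (Finset.univ.filter fun j : Fin n =>
        (∑ m : Fin r, f m * ω ^ ((a + (m : ℕ) * k) * (j : ℕ))) = 0).card
      ≤ P.roots.toFinset.card := hcard
    _ ≤ Multiset.card P.roots := P.roots.toFinset_card_le
    _ ≤ P.natDegree := P.card_roots'
    _ ≤ r - 1 := hdeg

theorem fourier_arith_rows_code_mds {F : Type*} [Field F]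
    (n r k a : ℕ) (ω : F) (hω : IsPrimitiveRoot ω n)
    (hk : 1 ≤ k) (hcop : Nat.gcd k n = 1) (hr : 1 ≤ r) (hrn : r ≤ n) :
    LinearIndependent F
        (fun m : Fin r => fun j : Fin n => ω ^ ((a + (m : ℕ) * k) * (j : ℕ))) ∧
      ∀ c ∈ Submodule.span F
          (Set.range fun m : Fin r => fun j : Fin n => ω ^ ((a + (m : ℕ) * k) * (j : ℕ))),
        c ≠ 0 → n - r + 1 ≤ hammingWt c := by
  have hn : 0 < n := lt_of_lt_of_le hr hrn
  -- weight bound for any nonzero coefficient vector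
  have hwt : ∀ f : Fin r → F, f ≠ 0 →
      n - r + 1 ≤ hammingWt (fun j : Fin n =>
        ∑ m : Fin r, f m * ω ^ ((a + (m : ℕ) * k) * (j : ℕ))) := by
    intro f hf
    have hz := fourier_zero_set_small n r k a ω hω hcop hr hrn f hf
    unfold hammingWt
    rw [Nat.card_eq_fintype_card, Fintype.card_subtype]
    have hsplit : (Finset.univ.filter fun j : Fin n =>
          (∑ m : Fin r, f m * ω ^ ((a + (m : ℕ) * k) * (j : ℕ))) ≠ 0).card =
        n - (Finset.univ.filter fun j : Fin n =>
          (∑ m : Fin r, f m * ω ^ ((a + (m : ℕ) * k) * (j : ℕ))) = 0).card := by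
      rw [Finset.filter_not, Finset.card_sdiff_of_subset (Finset.filter_subset _ _)]
      simp
    rw [hsplit]
    omega
  constructor
  · rw [Fintype.linearIndependent_iff]
    intro g hg
    by_contra hne
    push_neg at hne
    obtain ⟨m0, hm0⟩ := hne
    have hgne : g ≠ 0 := fun h => hm0 (by rw [h]; rfl)
    have := hwt g hgne
    have hc0 : (fun j : Fin n =>
        ∑ m : Fin r, g m * ω ^ ((a + (m : ℕ) * k) * (j : ℕ))) = 0 := by
      funext j
      have := congrFun hg j
      simpa using this
    rw [hc0] at this
    have : hammingWt (0 : Fin n → F) = 0 := by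
      unfold hammingWt
      simp
    omega
  · intro c hc hcne
    rw [Submodule.mem_span_range_iff_exists_fun] at hc
    obtain ⟨f, hfc⟩ := hc
    have hfne : f ≠ 0 := by
      rintro rfl
      apply hcne
      rw [← hfc]
      simp
    have hcfun : c = fun j : Fin n =>
        ∑ m : Fin r, f m * ω ^ ((a + (m : ℕ) * k) * (j : ℕ)) := by
      funext j
      rw [← hfc]
      simp
    rw [hcfun]
    exact hwt f hfne
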